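/- Let n > 2k > 0 and let F ⊆ C([n],k) be a nontrivially intersecting family. Then |F| ≤ C(n−1, k−1) − C(n−k−1, k−1) + 1. -/

import Mathlib

open Finset UV
open scoped FinsetFamily

namespace HMaux

/-- nontrivial: no common element -/
def NT (F : Finset (Finset ℕ)) : Prop := ¬ ∃ x, ∀ A ∈ F, x ∈ A

def Cross (X Y : Finset (Finset ℕ)) : Prop := ∀ A ∈ X, ∀ B ∈ Y, (A ∩ B).Nonempty

lemma NT.nonempty {F : Finset (Finset ℕ)} (h : NT F) : F.Nonempty := by
  rcases F.eq_empty_or_nonempty with rfl | hne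
  · exact absurd ⟨0, by simp⟩ h
  · exact hne

lemma one_uniform {V : Finset ℕ} {F : Finset (Finset ℕ)}
    (hF : F ⊆ V.powersetCard 1) (hint : Cross F F) (hnt : NT F) : False := by
  obtain ⟨A, hA⟩ := hnt.nonempty
  obtain ⟨a, rfl⟩ := Finset.card_eq_one.1 (Finset.mem_powersetCard.1 (hF hA)).2
  refine hnt ⟨a, fun B hB => ?_⟩
  obtain ⟨t, ht⟩ := hint B hB _ hA
  simp only [Finset.mem_inter, Finset.mem_singleton] at ht
  rw [← ht.2]; exact ht.1

/-- counting: sets of size r inside W meeting B -/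
lemma card_meeting (W B : Finset ℕ) (r : ℕ) (hB : B ⊆ W) :
    ((W.powersetCard r).filter (fun T => (T ∩ B).Nonempty)).card + (#W - #B).choose r = (#W).choose r := by
  have h1 : (W.powersetCard r).filter (fun T => ¬ (T ∩ B).Nonempty) = (W \ B).powersetCard r := by
    ext T
    simp only [mem_filter, mem_powersetCard, not_nonempty_iff_eq_empty,
      ← Finset.disjoint_iff_inter_eq_empty, subset_sdiff]
    tauto
  classical
  have h2 := card_filter_add_card_filter_not
    (s := W.powersetCard r) (p := fun T => (T ∩ B).Nonempty)
  rw [h1] at h2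
  rw [← card_powersetCard r W, ← h2, card_powersetCard, card_sdiff_of_subset hB]

end HMaux

namespace HMaux

variable {i j : ℕ} {V A B : Finset ℕ} {F X Y : Finset (Finset ℕ)}

lemma compress_eq (hij : i ≠ j) (hj : j ∈ A) (hi : i ∉ A) :
    compress {i} {j} A = insert i (A.erase j) := by
  rw [compress_of_disjoint_of_le (by simpa using hi) (by simpa using hj)]
  ext t
  simp only [sup_eq_union, mem_sdiff, mem_union, mem_singleton, mem_insert, mem_erase]
  constructor
  · rintro ⟨h1 | h1, h2⟩
    · exact Or.inr ⟨h2, h1⟩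
    · exact Or.inl h1
  · rintro (rfl | ⟨h1, h2⟩)
    · exact ⟨Or.inr rfl, hij⟩
    · exact ⟨Or.inl h2, h1⟩

lemma compress_eq' (h : ¬ (j ∈ A ∧ i ∉ A)) : compress {i} {j} A = A := by
  rw [compress]
  split_ifs with hc
  · exfalso; exact h ⟨by simpa using hc.2, by simpa using hc.1⟩
  · rfl

lemma compress_subset (hij : i ≠ j) (hi : i ∈ V) (hA : A ⊆ V) : compress {i} {j} A ⊆ V := by
  by_cases h : j ∈ A ∧ i ∉ A
  · rw [compress_eq hij h.1 h.2]
    exact insert_subset hi ((erase_subset _ _).trans hA)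
  · rw [compress_eq' h]; exact hA

lemma compression_subset_powersetCard {k : ℕ} (hij : i ≠ j) (hi : i ∈ V)
    (hF : F ⊆ V.powersetCard k) : 𝓒 {i} {j} F ⊆ V.powersetCard k := by
  intro a ha
  rw [UV.mem_compression] at ha
  obtain ⟨h1, -⟩ | ⟨-, b, hb, rfl⟩ := ha
  · exact hF h1
  · have hb' := mem_powersetCard.1 (hF hb)
    rw [mem_powersetCard]
    refine ⟨compress_subset hij hi hb'.1, ?_⟩
    rw [UV.card_compress (by simp)]
    exact hb'.2

/-- membership in a compressed family: the useful case analysis -/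
lemma mem_compression_cases (ha : A ∈ 𝓒 {i} {j} F) :
    (A ∈ F ∧ compress {i} {j} A ∈ F) ∨
    (A ∉ F ∧ ∃ b ∈ F, j ∈ b ∧ i ∉ b ∧ A = insert i (b.erase j)) := by
  rw [UV.mem_compression] at ha
  obtain h | ⟨h1, b, hb, hb2⟩ := ha
  · exact Or.inl h
  · refine Or.inr ⟨h1, b, hb, ?_⟩
    by_cases hc : j ∈ b ∧ i ∉ b
    · by_cases hij : i = j
      · exfalso; rw [hij] at hc; exact hc.2 hc.1
      · exact ⟨hc.1, hc.2, by rw [← hb2, compress_eq hij hc.1 hc.2]⟩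
    · exfalso; rw [compress_eq' hc] at hb2; rw [hb2] at hb; exact h1 hb

lemma cross_compression (hij : i ≠ j) (h : Cross X Y) :
    Cross (𝓒 {i} {j} X) (𝓒 {i} {j} Y) := by
  intro A hA B hB
  obtain ⟨hA1, hA2⟩ | ⟨hA1, a, ha, haj, hai, rfl⟩ := mem_compression_cases hA
  · obtain ⟨hB1, hB2⟩ | ⟨hB1, b, hb, hbj, hbi, rfl⟩ := mem_compression_cases hB
    · exact h A hA1 B hB1
    · -- A ∈ X (kept), B = σb moved
      obtain ⟨t, ht⟩ := h A hA1 b hb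
      simp only [mem_inter] at ht
      by_cases htj : t = j
      · -- A ∩ b = possibly only j; A contains j
        subst htj
        by_cases hAi : i ∈ A
        · exact ⟨i, mem_inter.2 ⟨hAi, mem_insert_self _ _⟩⟩
        · -- compress A = insert i (A.erase j) ∈ X
          rw [compress_eq hij ht.1 hAi] at hA2
          obtain ⟨s, hs⟩ := h _ hA2 b hb
          simp only [mem_inter, mem_insert, mem_erase] at hs
          obtain ⟨rfl | ⟨hs1, hs2⟩, hsb⟩ := hs
          · exact absurd hsb hbi
          · exact ⟨s, mem_inter.2 ⟨hs2, mem_insert_of_mem (mem_erase.2 ⟨hs1, hsb⟩)⟩⟩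
      · exact ⟨t, mem_inter.2 ⟨ht.1, mem_insert_of_mem (mem_erase.2 ⟨htj, ht.2⟩)⟩⟩
  · obtain ⟨hB1, hB2⟩ | ⟨hB1, b, hb, hbj, hbi, rfl⟩ := mem_compression_cases hB
    · -- symmetric: A moved, B kept
      obtain ⟨t, ht⟩ := h a ha B hB1
      simp only [mem_inter] at ht
      by_cases htj : t = j
      · subst htj
        by_cases hBi : i ∈ B
        · exact ⟨i, mem_inter.2 ⟨mem_insert_self _ _, hBi⟩⟩
        · rw [compress_eq hij ht.2 hBi] at hB2
          obtain ⟨s, hs⟩ := h a ha _ hB2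
          simp only [mem_inter, mem_insert, mem_erase] at hs
          obtain ⟨hsa, rfl | ⟨hs1, hs2⟩⟩ := hs
          · exact absurd hsa hai
          · exact ⟨s, mem_inter.2 ⟨mem_insert_of_mem (mem_erase.2 ⟨hs1, hsa⟩), hs2⟩⟩
      · exact ⟨t, mem_inter.2 ⟨mem_insert_of_mem (mem_erase.2 ⟨htj, ht.1⟩), ht.2⟩⟩
    · -- both moved
      obtain ⟨t, ht⟩ := h a ha b hb
      simp only [mem_inter] at ht
      by_cases htj : t = j
      · exact ⟨i, mem_inter.2 ⟨mem_insert_self _ _, mem_insert_self _ _⟩⟩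
      · exact ⟨t, mem_inter.2 ⟨mem_insert_of_mem (mem_erase.2 ⟨htj, ht.1⟩),
          mem_insert_of_mem (mem_erase.2 ⟨htj, ht.2⟩)⟩⟩

end HMaux

namespace HMaux

variable {i j : ℕ} {V A B : Finset ℕ} {F X Y : Finset (Finset ℕ)}

def measure (F : Finset (Finset ℕ)) : ℕ := ∑ A ∈ F, ∑ a ∈ A, 2 ^ a

lemma measure_compression_lt (hij : i < j) (hne : 𝓒 {i} {j} F ≠ F) :
    measure (𝓒 {i} {j} F) < measure F := by
  have h : ({i} : Finset ℕ).max' (singleton_nonempty i) < ({j} : Finset ℕ).max' (singleton_nonempty j) := by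
    simpa using hij
  rw [UV.compression] at hne ⊢
  have q : ∀ Q ∈ {A ∈ F | compress {i} {j} A ∉ F}, compress {i} {j} Q ≠ Q := by
    simp_rw [mem_filter]
    intro Q hQ hQ2
    rw [hQ2] at hQ
    exact hQ.2 hQ.1
  have uA : {A ∈ F | compress {i} {j} A ∈ F} ∪ {A ∈ F | compress {i} {j} A ∉ F} = F :=
    filter_union_filter_not_eq _ _
  have ne₂ : {A ∈ F | compress {i} {j} A ∉ F}.Nonempty := by
    refine nonempty_iff_ne_empty.2 fun z => hne ?_
    rw [filter_image, z, image_empty, union_empty]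
    rwa [z, union_empty] at uA
  rw [measure, measure, sum_union compress_disjoint]
  conv_rhs => rw [← uA]
  rw [sum_union (disjoint_filter_filter_not _ _ _), add_lt_add_iff_left, filter_image,
    sum_image compress_injOn]
  refine sum_lt_sum_of_nonempty ne₂ fun A hA => ?_
  rw [geomSum_lt_geomSum_iff_toColex_lt_toColex le_rfl]
  exact toColex_compress_lt_toColex h <| q _ hA

/-- a family shifted w.r.t. all pairs from V -/
def Shifted (V : Finset ℕ) (F : Finset (Finset ℕ)) : Prop :=
  ∀ i j, i ∈ V → j ∈ V → i < j → IsCompressed {i} {j} F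

lemma Shifted.mem (hV : Shifted V F) (hi : i ∈ V) (hj : j ∈ V) (hij : i < j)
    (hA : A ∈ F) (hjA : j ∈ A) (hiA : i ∉ A) : insert i (A.erase j) ∈ F := by
  have h := compress_mem_compression (u := {i}) (v := {j}) hA
  rw [(hV i j hi hj hij).eq, compress_eq hij.ne hjA hiA] at h
  exact h

/-- if a compression trivializes a nontrivial family, we get a 2-cover -/
lemma trivialize_cover (hij : i < j) (hnt : NT F)
    (htr : ∃ x, ∀ B ∈ 𝓒 {i} {j} F, x ∈ B) : ∀ A ∈ F, i ∈ A ∨ j ∈ A := by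
  obtain ⟨x, hx⟩ := htr
  have key : ∀ A ∈ F, x ∈ compress {i} {j} A := by
    intro A hA
    have h := compress_mem_compression (u := ({i} : Finset ℕ)) (v := ({j} : Finset ℕ)) hA
    exact hx _ h
  by_cases hxi : x = i
  · intro A hA
    have h := key A hA
    by_cases hc : j ∈ A ∧ i ∉ A
    · exact Or.inr hc.1
    · rw [compress_eq' hc] at h; rw [← hxi]; exact Or.inl h
  · exfalso
    refine hnt ⟨x, fun A hA => ?_⟩
    have h := key A hA
    by_cases hc : j ∈ A ∧ i ∉ A
    · rw [compress_eq hij.ne hc.1 hc.2, mem_insert] at h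
      obtain rfl | h := h
      · exact absurd rfl hxi
      · exact (mem_erase.1 h).2
    · rwa [compress_eq' hc] at h

end HMaux

namespace HMaux

variable {i j : ℕ} {V A B : Finset ℕ} {F X Y : Finset (Finset ℕ)}

lemma measure_compression_le (hij : i < j) : measure (𝓒 {i} {j} F) ≤ measure F := by
  by_cases h : IsCompressed {i} {j} F
  · rw [h.eq]
  · exact (measure_compression_lt hij h).le

lemma pascal {a b : ℕ} (ha : 1 ≤ a) (hb : 1 ≤ b) :
    a.choose b = (a-1).choose (b-1) + (a-1).choose b := by
  obtain ⟨a', rfl⟩ := Nat.exists_eq_add_of_le ha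
  obtain ⟨b', rfl⟩ := Nat.exists_eq_add_of_le hb
  simp only [add_comm 1, Nat.add_sub_cancel]
  exact Nat.choose_succ_succ _ _

lemma card_filter_mem_add (z : ℕ) (X : Finset (Finset ℕ)) :
    #X = #(X.filter (fun A => z ∉ A)) + #((X.filter (fun A => z ∈ A)).image (·.erase z)) := by
  classical
  rw [card_image_of_injOn, add_comm]
  · have h := card_filter_add_card_filter_not (s := X) (p := fun A => z ∈ A)
    simpa using h.symm
  · intro A hA B hB h
    simp only [coe_filter, Set.mem_setOf_eq] at hA hB
    have h' : A.erase z = B.erase z := h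
    rw [← insert_erase hA.2, ← insert_erase hB.2, h']

/-- the Hilton cross-intersecting lemma -/
lemma cross_lemma : ∀ m μn ℓ : ℕ, ∀ (V : Finset ℕ) (X Y : Finset (Finset ℕ)),
    measure X + measure Y ≤ μn → 1 ≤ ℓ → 2*ℓ ≤ m → #V = m →
    X ⊆ V.powersetCard ℓ → Y ⊆ V.powersetCard ℓ → X.Nonempty → Y.Nonempty → Cross X Y →
    #X + #Y + (m - ℓ).choose ℓ ≤ m.choose ℓ + 1 := by
  intro m
  induction m using Nat.strong_induction_on with
  | _ m IHm =>
  intro μn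
  induction μn using Nat.strong_induction_on with
  | _ μn IHμ =>
  intro ℓ V X Y hμ hℓ hm hV hX hY hXne hYne hcross
  by_cases hbase : m = 2*ℓ
  -- base case m = 2ℓ : pairing with complements
  · subst hbase
    have hml : 2*ℓ - ℓ = ℓ := by omega
    rw [hml, Nat.choose_self]
    have hY' : #(Y.image (V \ ·)) = #Y := by
      apply card_image_of_injOn
      intro A hA B hB h
      have hA' : A ⊆ V := (mem_powersetCard.1 (hY hA)).1
      have hB' : B ⊆ V := (mem_powersetCard.1 (hY hB)).1
      have h' : V \ A = V \ B := h
      rw [← Finset.sdiff_sdiff_eq_self hA', ← Finset.sdiff_sdiff_eq_self hB', h']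
    have hdisj : Disjoint X (Y.image (V \ ·)) := by
      rw [disjoint_right]
      rintro T hT hTX
      obtain ⟨B, hB, rfl⟩ := mem_image.1 hT
      obtain ⟨t, ht⟩ := hcross _ hTX B hB
      simp only [mem_inter, mem_sdiff] at ht
      exact ht.1.2 ht.2
    have hsub : X ∪ Y.image (V \ ·) ⊆ V.powersetCard ℓ := by
      apply union_subset hX
      intro T hT
      obtain ⟨B, hB, rfl⟩ := mem_image.1 hT
      have hB' := mem_powersetCard.1 (hY hB)
      rw [mem_powersetCard]
      exact ⟨sdiff_subset, by rw [card_sdiff_of_subset hB'.1, hV, hB'.2]; omega⟩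
    have := (card_le_card hsub).trans_eq (card_powersetCard _ _)
    rw [card_union_of_disjoint hdisj, hY', hV] at this
    omega
  -- m ≥ 2ℓ+1
  have hm1 : 2*ℓ + 1 ≤ m := by omega
  by_cases hsh : ∃ p q, p ∈ V ∧ q ∈ V ∧ p < q ∧ ¬(IsCompressed {p} {q} X ∧ IsCompressed {p} {q} Y)
  -- compression step
  · obtain ⟨p, q, hp, hq, hpq, hnc⟩ := hsh
    have hmlt : measure (𝓒 {p} {q} X) + measure (𝓒 {p} {q} Y) < μn := by
      have h1 := measure_compression_le (F := X) hpq
      have h2 := measure_compression_le (F := Y) hpq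
      rcases not_and_or.1 hnc with h | h
      · have := measure_compression_lt (F := X) hpq h; omega
      · have := measure_compression_lt (F := Y) hpq h; omega
    have hcard : #(𝓒 {p} {q} X) = #X := card_compression _ _ _
    have hcard' : #(𝓒 {p} {q} Y) = #Y := card_compression _ _ _
    have := IHμ _ hmlt ℓ V (𝓒 {p} {q} X) (𝓒 {p} {q} Y) le_rfl hℓ hm hV
      (compression_subset_powersetCard hpq.ne hp hX)
      (compression_subset_powersetCard hpq.ne hp hY)
      (by rw [← card_pos, hcard, card_pos]; exact hXne)
      (by rw [← card_pos, hcard', card_pos]; exact hYne)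
      (cross_compression hpq.ne hcross)
    omega
  -- fully shifted
  push_neg at hsh
  have hshX : Shifted V X := fun p q hp hq hpq => ((hsh p q hp hq hpq).1)
  have hshY : Shifted V Y := fun p q hp hq hpq => ((hsh p q hp hq hpq).2)
  clear hsh
  have hzV : V.Nonempty := card_pos.1 (by omega)
  have hzmem : V.max' hzV ∈ V := max'_mem V hzV
  set z := V.max' hzV with hzdef
  have hVe : #(V.erase z) = m - 1 := by rw [card_erase_of_mem hzmem, hV]
  -- ℓ = 1 special case
  by_cases hl1 : ℓ = 1
  · subst hl1
    obtain ⟨B₀, hB₀⟩ := hYne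
    obtain ⟨A₀, hA₀⟩ := hXne
    have heq : ∀ A ∈ X, ∀ B ∈ Y, A = B := by
      intro A hA B hB
      obtain ⟨t, ht⟩ := hcross A hA B hB
      simp only [mem_inter] at ht
      obtain ⟨a, rfl⟩ := Finset.card_eq_one.1 (mem_powersetCard.1 (hX hA)).2
      obtain ⟨b, rfl⟩ := Finset.card_eq_one.1 (mem_powersetCard.1 (hY hB)).2
      simp only [mem_singleton] at ht
      rw [← ht.1, ← ht.2]
    have hXsub : X ⊆ {B₀} := fun A hA => mem_singleton.2 (heq A hA B₀ hB₀)
    have hYsub : Y ⊆ {A₀} := fun B hB => mem_singleton.2 (heq A₀ hA₀ B hB).symm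
    have h1 := card_le_card hXsub
    have h2 := card_le_card hYsub
    simp only [card_singleton] at h1 h2
    rw [Nat.choose_one_right, Nat.choose_one_right]
    omega
  have hl2 : 2 ≤ ℓ := by omega
  -- nonempty part avoiding z, for a shifted family
  have havoid : ∀ (W : Finset (Finset ℕ)), Shifted V W → W ⊆ V.powersetCard ℓ → W.Nonempty →
      (W.filter (fun A => z ∉ A)).Nonempty := by
    rintro W hshW hsub ⟨A, hA⟩
    by_cases hz : z ∈ A
    · have hAV := mem_powersetCard.1 (hsub hA)
      have hne : (V \ A).Nonempty := by
        rw [← card_pos, card_sdiff_of_subset hAV.1, hV, hAV.2]; omega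
      obtain ⟨j₀, hj₀⟩ := hne
      rw [mem_sdiff] at hj₀
      have hj₀z : j₀ < z := lt_of_le_of_ne (le_max' V j₀ hj₀.1) (fun h => hj₀.2 (h ▸ hz))
      have hmem := hshW.mem hj₀.1 hzmem hj₀z hA hz hj₀.2
      refine ⟨_, mem_filter.2 ⟨hmem, ?_⟩⟩
      simp only [mem_insert, mem_erase, not_or]
      exact ⟨fun h => hj₀.2 (h ▸ hz), fun h => h.1 rfl⟩
    · exact ⟨A, mem_filter.2 ⟨hA, hz⟩⟩
  -- the decompositions
  have hsplitX := card_filter_mem_add z X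
  have hsplitY := card_filter_mem_add z Y
  set X₀ := X.filter (fun A => z ∉ A) with hX₀def
  set Y₀ := Y.filter (fun A => z ∉ A) with hY₀def
  set x₁ := (X.filter (fun A => z ∈ A)).image (·.erase z) with hx₁def
  set y₁ := (Y.filter (fun A => z ∈ A)).image (·.erase z) with hy₁def
  have hX₀sub : X₀ ⊆ (V.erase z).powersetCard ℓ := by
    intro A hA
    rw [mem_filter] at hA
    have h := mem_powersetCard.1 (hX hA.1)
    exact mem_powersetCard.2 ⟨(subset_erase).2 ⟨h.1, hA.2⟩, h.2⟩
  have hY₀sub : Y₀ ⊆ (V.erase z).powersetCard ℓ := by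
    intro A hA
    rw [mem_filter] at hA
    have h := mem_powersetCard.1 (hY hA.1)
    exact mem_powersetCard.2 ⟨(subset_erase).2 ⟨h.1, hA.2⟩, h.2⟩
  have hx₁sub : x₁ ⊆ (V.erase z).powersetCard (ℓ-1) := by
    intro T hT
    obtain ⟨A, hA, rfl⟩ := mem_image.1 hT
    rw [mem_filter] at hA
    have h := mem_powersetCard.1 (hX hA.1)
    exact mem_powersetCard.2 ⟨erase_subset_erase z h.1, by rw [card_erase_of_mem hA.2, h.2]⟩
  have hy₁sub : y₁ ⊆ (V.erase z).powersetCard (ℓ-1) := by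
    intro T hT
    obtain ⟨A, hA, rfl⟩ := mem_image.1 hT
    rw [mem_filter] at hA
    have h := mem_powersetCard.1 (hY hA.1)
    exact mem_powersetCard.2 ⟨erase_subset_erase z h.1, by rw [card_erase_of_mem hA.2, h.2]⟩
  have hX₀ne : X₀.Nonempty := havoid X hshX hX hXne
  have hY₀ne : Y₀.Nonempty := havoid Y hshY hY hYne
  have hcross₀ : Cross X₀ Y₀ := fun A hA B hB =>
    hcross A (mem_filter.1 hA).1 B (mem_filter.1 hB).1
  have pas1 : m.choose ℓ = (m-1).choose (ℓ-1) + (m-1).choose ℓ := pascal (by omega) (by omega)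
  have pas2 : (m-ℓ).choose ℓ = (m-ℓ-1).choose (ℓ-1) + (m-ℓ-1).choose ℓ :=
    pascal (by omega) (by omega)
  have e1 : m - 1 - ℓ = m - ℓ - 1 := by omega
  -- main asymmetric subcase
  have main : ∀ (X Y : Finset (Finset ℕ)) (X₀ x₁ : Finset (Finset ℕ)),
      X ⊆ V.powersetCard ℓ → Y ⊆ V.powersetCard ℓ → Cross X Y →
      #X = #X₀ + #x₁ → X₀ ⊆ X → X₀ ⊆ (V.erase z).powersetCard ℓ →
      x₁ ⊆ (V.erase z).powersetCard (ℓ-1) →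
      (∀ T ∈ x₁, ∃ A ∈ X, z ∈ A ∧ T = A.erase z) →
      X₀.Nonempty → Y.Nonempty → (∀ B ∈ Y, z ∉ B) →
      #X + #Y + (m - ℓ).choose ℓ ≤ m.choose ℓ + 1 := by
    intro X Y X₀ x₁ hX hY hcross hsplit hX₀X hX₀sub hx₁sub hx₁src hX₀ne hYne hYz
    have hYsub : Y ⊆ (V.erase z).powersetCard ℓ := by
      intro B hB
      have h := mem_powersetCard.1 (hY hB)
      exact mem_powersetCard.2 ⟨(subset_erase).2 ⟨h.1, hYz B hB⟩, h.2⟩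
    obtain ⟨B₀, hB₀⟩ := hYne
    have hB₀' := mem_powersetCard.1 (hYsub hB₀)
    -- bound on x₁ via meeting B₀
    have hx₁meet : x₁ ⊆ ((V.erase z).powersetCard (ℓ-1)).filter (fun T => (T ∩ B₀).Nonempty) := by
      intro T hT
      obtain ⟨A, hA, hzA, rfl⟩ := hx₁src T hT
      refine mem_filter.2 ⟨hx₁sub hT, ?_⟩
      obtain ⟨t, ht⟩ := hcross A hA B₀ hB₀
      simp only [mem_inter] at ht
      have htz : t ≠ z := fun h => (hYz B₀ hB₀) (h ▸ ht.2)
      exact ⟨t, mem_inter.2 ⟨mem_erase.2 ⟨htz, ht.1⟩, ht.2⟩⟩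
    have hcm := card_meeting (V.erase z) B₀ (ℓ-1) hB₀'.1
    rw [hVe, hB₀'.2] at hcm
    have hx₁bound := card_le_card hx₁meet
    -- induction on smaller ground set
    have hIH := IHm (m-1) (by omega) (measure X₀ + measure Y) ℓ (V.erase z) X₀ Y le_rfl
      (by omega) (by omega) hVe hX₀sub hYsub hX₀ne ⟨B₀, hB₀⟩
      (fun A hA B hB => hcross A (hX₀X hA) B hB)
    rw [e1] at hIH hcm
    omega
  by_cases hy₁e : Y.filter (fun A => z ∈ A) = ∅
  · -- y₁ empty : Y avoids z
    have hYz : ∀ B ∈ Y, z ∉ B := by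
      intro B hB hzB
      exact (filter_eq_empty_iff.1 hy₁e) hB hzB
    refine main X Y X₀ x₁ hX hY hcross hsplitX (filter_subset _ _) hX₀sub hx₁sub ?_ hX₀ne hYne hYz
    intro T hT
    obtain ⟨A, hA, rfl⟩ := mem_image.1 hT
    rw [mem_filter] at hA
    exact ⟨A, hA.1, hA.2, rfl⟩
  by_cases hx₁e : X.filter (fun A => z ∈ A) = ∅
  · -- x₁ empty : X avoids z , symmetric
    have hXz : ∀ B ∈ X, z ∉ B := by
      intro B hB hzB
      exact (filter_eq_empty_iff.1 hx₁e) hB hzB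
    have hcross' : Cross Y X := fun B hB A hA => by
      rw [inter_comm]; exact hcross A hA B hB
    have := main Y X Y₀ y₁ hY hX hcross' hsplitY (filter_subset _ _) hY₀sub hy₁sub ?_ hY₀ne hXne hXz
    · omega
    intro T hT
    obtain ⟨A, hA, rfl⟩ := mem_image.1 hT
    rw [mem_filter] at hA
    exact ⟨A, hA.1, hA.2, rfl⟩
  -- both x₁ and y₁ nonempty
  have hx₁ne : x₁.Nonempty := by
    rw [hx₁def, image_nonempty, nonempty_iff_ne_empty]; exact hx₁e
  have hy₁ne : y₁.Nonempty := by
    rw [hy₁def, image_nonempty, nonempty_iff_ne_empty]; exact hy₁e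
  have hcross₁ : Cross x₁ y₁ := by
    intro T hT S hS
    obtain ⟨A, hA, rfl⟩ := mem_image.1 hT
    obtain ⟨B, hB, rfl⟩ := mem_image.1 hS
    rw [mem_filter] at hA hB
    by_cases hother : ∃ t ∈ A ∩ B, t ≠ z
    · obtain ⟨t, ht, htz⟩ := hother
      rw [mem_inter] at ht
      exact ⟨t, mem_inter.2 ⟨mem_erase.2 ⟨htz, ht.1⟩, mem_erase.2 ⟨htz, ht.2⟩⟩⟩
    · exfalso
      push_neg at hother
      have hAV := mem_powersetCard.1 (hX hA.1)
      have hBV := mem_powersetCard.1 (hY hB.1)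
      have hABV : A ∪ B ⊆ V := union_subset hAV.1 hBV.1
      have hABcard : #(A ∪ B) < m := by
        have h1 := card_union_le A B
        have h2 : 0 < #(A ∩ B) := card_pos.2 (hcross A hA.1 B hB.1)
        have h3 := card_union_add_card_inter A B
        omega
      have hne : (V \ (A ∪ B)).Nonempty := by
        rw [← card_pos, card_sdiff_of_subset hABV, hV]; omega
      obtain ⟨j₀, hj₀⟩ := hne
      rw [mem_sdiff, mem_union, not_or] at hj₀
      have hj₀z : j₀ < z :=
        lt_of_le_of_ne (le_max' V j₀ hj₀.1) (fun h => hj₀.2.1 (h ▸ hA.2))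
      have hmem := hshX.mem hj₀.1 hzmem hj₀z hA.1 hA.2 hj₀.2.1
      obtain ⟨t, ht⟩ := hcross _ hmem B hB.1
      simp only [mem_inter, mem_insert, mem_erase] at ht
      obtain ⟨rfl | ⟨htz, htA⟩, htB⟩ := ht
      · exact hj₀.2.2 htB
      · exact htz (hother t (mem_inter.2 ⟨htA, htB⟩))
  have hIH0 := IHm (m-1) (by omega) (measure X₀ + measure Y₀) ℓ (V.erase z) X₀ Y₀ le_rfl
    (by omega) (by omega) hVe hX₀sub hY₀sub hX₀ne hY₀ne hcross₀
  have hIH1 := IHm (m-1) (by omega) (measure x₁ + measure y₁) (ℓ-1) (V.erase z) x₁ y₁ le_rfl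
    (by omega) (by omega) hVe hx₁sub hy₁sub hx₁ne hy₁ne hcross₁
  have e2 : m - 1 - (ℓ - 1) = m - ℓ := by omega
  rw [e1] at hIH0
  rw [e2] at hIH1
  have epas : (m-ℓ-1).choose (ℓ-1) + 1 ≤ (m-ℓ).choose (ℓ-1) := by
    have h := pascal (a := m-ℓ) (b := ℓ-1) (by omega) (by omega)
    have e3 : ℓ - 1 - 1 = ℓ - 2 := by omega
    rw [e3] at h
    have hpos : 0 < (m-ℓ-1).choose (ℓ-2) := Nat.choose_pos (by omega)
    omega
  omega
end HMaux

namespace HMaux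

variable {V A B : Finset ℕ} {F X Y : Finset (Finset ℕ)}

/-- the two-cover case of Hilton–Milner -/
lemma two_cover {k u w : ℕ} (hk : 2 ≤ k) (hm : 2*k+1 ≤ #V)
    (hu : u ∈ V) (hw : w ∈ V) (huw : u ≠ w)
    (hF : F ⊆ V.powersetCard k) (hint : Cross F F) (hnt : NT F)
    (hcov : ∀ A ∈ F, u ∈ A ∨ w ∈ A) :
    #F + (#V - k - 1).choose (k-1) ≤ (#V - 1).choose (k-1) + 1 := by
  classical
  set m := #V with hmdef
  set W := (V.erase u).erase w with hWdef
  have hwu : w ∈ V.erase u := mem_erase.2 ⟨huw.symm, hw⟩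
  have hWcard : #W = m - 2 := by
    rw [hWdef, card_erase_of_mem hwu, card_erase_of_mem hu]
    omega
  -- split F into three parts
  have hsplit1 := card_filter_add_card_filter_not (s := F) (p := fun A => u ∈ A)
  have hsplit2 := card_filter_add_card_filter_not
    (s := F.filter (fun A => u ∈ A)) (p := fun A => w ∈ A)
  have hFw : F.filter (fun A => ¬ u ∈ A) = F.filter (fun A => w ∈ A ∧ u ∉ A) := by
    ext A
    simp only [mem_filter]
    constructor
    · rintro ⟨hA, hA2⟩
      exact ⟨hA, (hcov A hA).resolve_left hA2, hA2⟩
    · rintro ⟨hA, hA2, hA3⟩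
      exact ⟨hA, hA3⟩
  have hFuw : (F.filter (fun A => u ∈ A)).filter (fun A => ¬ w ∈ A)
      = F.filter (fun A => u ∈ A ∧ w ∉ A) := by
    ext A; simp only [mem_filter]; tauto
  rw [hFw] at hsplit1
  rw [hFuw, filter_filter] at hsplit2
  -- the images
  set X := (F.filter (fun A => u ∈ A ∧ w ∉ A)).image (·.erase u) with hXdef
  set Y := (F.filter (fun A => w ∈ A ∧ u ∉ A)).image (·.erase w) with hYdef
  set Z := F.filter (fun A => u ∈ A ∧ w ∈ A) with hZdef
  have hXcard : #X = #(F.filter (fun A => u ∈ A ∧ w ∉ A)) := by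
    apply card_image_of_injOn
    intro A hA B hB h
    simp only [coe_filter, Set.mem_setOf_eq] at hA hB
    have h' : A.erase u = B.erase u := h
    rw [← insert_erase hA.2.1, ← insert_erase hB.2.1, h']
  have hYcard : #Y = #(F.filter (fun A => w ∈ A ∧ u ∉ A)) := by
    apply card_image_of_injOn
    intro A hA B hB h
    simp only [coe_filter, Set.mem_setOf_eq] at hA hB
    have h' : A.erase w = B.erase w := h
    rw [← insert_erase hA.2.1, ← insert_erase hB.2.1, h']
  have hFsplit : #F = #X + #Y + #Z := by omega
  -- subsets of the small ground set
  have hXsub : X ⊆ W.powersetCard (k-1) := by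
    intro T hT
    obtain ⟨A, hA, rfl⟩ := mem_image.1 hT
    rw [mem_filter] at hA
    have h := mem_powersetCard.1 (hF hA.1)
    refine mem_powersetCard.2 ⟨?_, by rw [card_erase_of_mem hA.2.1, h.2]⟩
    rw [hWdef]
    intro t ht
    rw [mem_erase] at ht ⊢
    refine ⟨fun he => hA.2.2 (he ▸ ht.2), mem_erase.2 ⟨ht.1, h.1 ht.2⟩⟩
  have hYsub : Y ⊆ W.powersetCard (k-1) := by
    intro T hT
    obtain ⟨A, hA, rfl⟩ := mem_image.1 hT
    rw [mem_filter] at hA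
    have h := mem_powersetCard.1 (hF hA.1)
    refine mem_powersetCard.2 ⟨?_, by rw [card_erase_of_mem hA.2.1, h.2]⟩
    rw [hWdef]
    intro t ht
    rw [mem_erase] at ht ⊢
    refine ⟨ht.1, mem_erase.2 ⟨fun he => hA.2.2 (he ▸ ht.2), h.1 ht.2⟩⟩
  -- nonemptiness
  have hXne : X.Nonempty := by
    rw [hXdef, image_nonempty]
    rcases (F.filter (fun A => u ∈ A ∧ w ∉ A)).eq_empty_or_nonempty with he | hne
    · exfalso
      refine hnt ⟨w, fun A hA => ?_⟩
      by_contra hwA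
      have hu' := (hcov A hA).resolve_right hwA
      exact (eq_empty_iff_forall_notMem.1 he) A (mem_filter.2 ⟨hA, hu', hwA⟩)
    · exact hne
  have hYne : Y.Nonempty := by
    rw [hYdef, image_nonempty]
    rcases (F.filter (fun A => w ∈ A ∧ u ∉ A)).eq_empty_or_nonempty with he | hne
    · exfalso
      refine hnt ⟨u, fun A hA => ?_⟩
      by_contra huA
      have hw' := (hcov A hA).resolve_left huA
      exact (eq_empty_iff_forall_notMem.1 he) A (mem_filter.2 ⟨hA, hw', huA⟩)
    · exact hne
  -- cross-intersecting
  have hcross : Cross X Y := by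
    intro T hT S hS
    obtain ⟨A, hA, rfl⟩ := mem_image.1 hT
    obtain ⟨B, hB, rfl⟩ := mem_image.1 hS
    rw [mem_filter] at hA hB
    obtain ⟨t, ht⟩ := hint A hA.1 B hB.1
    rw [mem_inter] at ht
    have htu : t ≠ u := fun h => hB.2.2 (h ▸ ht.2)
    have htw : t ≠ w := fun h => hA.2.2 (h ▸ ht.1)
    exact ⟨t, mem_inter.2 ⟨mem_erase.2 ⟨htu, ht.1⟩, mem_erase.2 ⟨htw, ht.2⟩⟩⟩
  have hcl := cross_lemma (#W) (measure X + measure Y) (k-1) W X Y le_rfl (by omega)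
    (by omega) rfl hXsub hYsub hXne hYne hcross
  rw [hWcard] at hcl
  have e1 : m - 2 - (k-1) = m - k - 1 := by omega
  rw [e1] at hcl
  -- bound on Z
  have hZbound : #Z ≤ (m-2).choose (k-2) := by
    have hZcard : #Z = #(Z.image (fun A => (A.erase u).erase w)) := by
      rw [eq_comm]
      apply card_image_of_injOn
      intro A hA B hB h
      simp only [hZdef, coe_filter, Set.mem_setOf_eq] at hA hB
      have h' : (A.erase u).erase w = (B.erase u).erase w := h
      have hwA : w ∈ A.erase u := mem_erase.2 ⟨fun he => huw (he.symm), hA.2.2⟩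
      have hwB : w ∈ B.erase u := mem_erase.2 ⟨fun he => huw (he.symm), hB.2.2⟩
      have := congrArg (insert u) (congrArg (insert w) h')
      rwa [insert_erase hwA, insert_erase hwB, insert_erase hA.2.1, insert_erase hB.2.1] at this
    have hZsub : Z.image (fun A => (A.erase u).erase w) ⊆ W.powersetCard (k-2) := by
      intro T hT
      obtain ⟨A, hA, rfl⟩ := mem_image.1 hT
      simp only [hZdef, mem_filter] at hA
      have h := mem_powersetCard.1 (hF hA.1)
      refine mem_powersetCard.2 ⟨?_, ?_⟩
      · rw [hWdef]
        exact erase_subset_erase w (erase_subset_erase u h.1)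
      · rw [card_erase_of_mem (mem_erase.2 ⟨fun he => huw he.symm, hA.2.2⟩),
          card_erase_of_mem hA.2.1, h.2]
        omega
    calc #Z = _ := hZcard
    _ ≤ #(W.powersetCard (k-2)) := card_le_card hZsub
    _ = (m-2).choose (k-2) := by rw [card_powersetCard, hWcard]
  have pasB : (m-1).choose (k-1) = (m-2).choose (k-2) + (m-2).choose (k-1) := by
    have := pascal (a := m-1) (b := k-1) (by omega) (by omega)
    have e2 : m - 1 - 1 = m - 2 := by omega
    have e3 : k - 1 - 1 = k - 2 := by omega
    rwa [e2, e3] at this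
  omega

end HMaux

namespace HMaux

/-- Hilton–Milner, general ground set version -/
theorem HMgen : ∀ N μN k : ℕ, ∀ (V : Finset ℕ) (F : Finset (Finset ℕ)),
    k + #V ≤ N → measure F ≤ μN → 1 ≤ k → 2*k ≤ #V →
    F ⊆ V.powersetCard k → Cross F F → NT F →
    #F + (#V - k - 1).choose (k-1) ≤ (#V - 1).choose (k-1) + 1 := by
  intro N
  induction N using Nat.strong_induction_on with
  | _ N IHN =>
  intro μN
  induction μN using Nat.strong_induction_on with
  | _ μN IHμ =>
  intro k V F hN hμ hk hkV hF hint hnt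
  rcases eq_or_lt_of_le hk with hk1 | hk2
  · exact absurd (one_uniform (hk1 ▸ hF) hint hnt) not_false
  -- k ≥ 2 now
  rcases eq_or_lt_of_le hkV with hbase | hm1
  · -- base case : #V = 2k, use complement pairing
    have hdisj : Disjoint F (F.image (V \ ·)) := by
      rw [disjoint_right]
      rintro T hT hTF
      obtain ⟨B, hB, rfl⟩ := mem_image.1 hT
      obtain ⟨t, ht⟩ := hint _ hTF B hB
      simp only [mem_inter, mem_sdiff] at ht
      exact ht.1.2 ht.2
    have hccard : #(F.image (V \ ·)) = #F := by
      apply card_image_of_injOn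
      intro A hA B hB h
      have hA' : A ⊆ V := (mem_powersetCard.1 (hF hA)).1
      have hB' : B ⊆ V := (mem_powersetCard.1 (hF hB)).1
      have h' : V \ A = V \ B := h
      rw [← Finset.sdiff_sdiff_eq_self hA', ← Finset.sdiff_sdiff_eq_self hB', h']
    have hsub : F ∪ F.image (V \ ·) ⊆ V.powersetCard k := by
      apply union_subset hF
      intro T hT
      obtain ⟨B, hB, rfl⟩ := mem_image.1 hT
      have hB' := mem_powersetCard.1 (hF hB)
      rw [mem_powersetCard]
      refine ⟨sdiff_subset, ?_⟩
      rw [card_sdiff_of_subset hB'.1, ← hbase, hB'.2]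
      omega
    have hle := (card_le_card hsub).trans_eq (card_powersetCard _ _)
    rw [card_union_of_disjoint hdisj, hccard, ← hbase] at hle
    -- #F + #F ≤ (2k).choose k
    have hch : (2*k).choose k = (2*k-1).choose (k-1) + (2*k-1).choose (k-1) := by
      have hp := pascal (a := 2*k) (b := k) (by omega) (by omega)
      have hsymm : (2*k-1).choose ((2*k-1) - k) = (2*k-1).choose k :=
        Nat.choose_symm (by omega)
      have e : 2*k - 1 - k = k - 1 := by omega
      rw [e] at hsymm
      omega
    have e2 : #V - k - 1 = k - 1 := by omega
    have hself : (k-1).choose (k-1) = 1 := Nat.choose_self _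
    rw [e2, hself, ← hbase]
    omega
  -- #V ≥ 2k+1
  by_cases hsh : ∃ p q, p ∈ V ∧ q ∈ V ∧ p < q ∧ ¬ IsCompressed {p} {q} F
  · -- compression step
    obtain ⟨p, q, hp, hq, hpq, hnc⟩ := hsh
    by_cases hnt' : NT (𝓒 {p} {q} F)
    · have hmlt : measure (𝓒 {p} {q} F) < μN :=
        lt_of_lt_of_le (measure_compression_lt hpq hnc) hμ
      have hcard : #(𝓒 {p} {q} F) = #F := card_compression _ _ _
      have := IHμ _ hmlt k V (𝓒 {p} {q} F) hN le_rfl hk hkV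
        (compression_subset_powersetCard hpq.ne hp hF)
        (cross_compression hpq.ne hint) hnt'
      omega
    · -- compression trivializes : two-cover
      rw [NT, not_not] at hnt'
      exact two_cover hk2 (by omega) hp hq hpq.ne hF hint hnt
        (trivialize_cover hpq hnt hnt')
  -- fully shifted
  push_neg at hsh
  have hshF : Shifted V F := fun p q hp hq hpq => hsh p q hp hq hpq
  have hzV : V.Nonempty := card_pos.1 (by omega)
  have hzmem : V.max' hzV ∈ V := max'_mem V hzV
  set z := V.max' hzV with hzdef
  have hVe : #(V.erase z) = #V - 1 := card_erase_of_mem hzmem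
  have hsplitF := card_filter_mem_add z F
  set F₀ := F.filter (fun A => z ∉ A) with hF₀def
  set L := (F.filter (fun A => z ∈ A)).image (·.erase z) with hLdef
  have hF₀sub : F₀ ⊆ (V.erase z).powersetCard k := by
    intro A hA
    rw [hF₀def, mem_filter] at hA
    have h := mem_powersetCard.1 (hF hA.1)
    exact mem_powersetCard.2 ⟨(subset_erase).2 ⟨h.1, hA.2⟩, h.2⟩
  have hLsub : L ⊆ (V.erase z).powersetCard (k-1) := by
    intro T hT
    obtain ⟨A, hA, rfl⟩ := mem_image.1 hT
    rw [mem_filter] at hA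
    have h := mem_powersetCard.1 (hF hA.1)
    exact mem_powersetCard.2 ⟨erase_subset_erase z h.1, by rw [card_erase_of_mem hA.2, h.2]⟩
  have hF₀int : Cross F₀ F₀ := fun A hA B hB =>
    hint A (mem_filter.1 hA).1 B (mem_filter.1 hB).1
  have hF₀ne : F₀.Nonempty := by
    rcases F₀.eq_empty_or_nonempty with he | hne
    · exfalso
      refine hnt ⟨z, fun A hA => ?_⟩
      by_contra hzA
      exact (eq_empty_iff_forall_notMem.1 he) A (mem_filter.2 ⟨hA, hzA⟩)
    · exact hne
  set m := #V with hmdef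
  have pasB : (m-1).choose (k-1) = (m-2).choose (k-2) + (m-2).choose (k-1) := by
    have := pascal (a := m-1) (b := k-1) (by omega) (by omega)
    have e2 : m - 1 - 1 = m - 2 := by omega
    have e3 : k - 1 - 1 = k - 2 := by omega
    rwa [e2, e3] at this
  have pasA : (m-k-1).choose (k-1) = (m-k-2).choose (k-2) + (m-k-2).choose (k-1) := by
    have := pascal (a := m-k-1) (b := k-1) (by omega) (by omega)
    have e2 : m - k - 1 - 1 = m - k - 2 := by omega
    have e3 : k - 1 - 1 = k - 2 := by omega
    rwa [e2, e3] at this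
  by_cases hF₀t : NT F₀
  · -- F₀ is nontrivial : induct on it
    have hIH0 := IHN (k + (m-1)) (by omega) (measure F₀) k (V.erase z) F₀ (by omega)
      le_rfl hk (by omega) hF₀sub hF₀int hF₀t
    rw [hVe] at hIH0
    have e4 : m - 1 - k - 1 = m - k - 2 := by omega
    have e5 : m - 1 - 1 = m - 2 := by omega
    rw [e4, e5] at hIH0
    rcases L.eq_empty_or_nonempty with hLe | hLne
    · -- no sets containing z
      have : #F = #F₀ := by rw [hsplitF, hLe, card_empty]; omega
      have hmono : (m-k-2).choose (k-2) ≤ (m-2).choose (k-2) :=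
        Nat.choose_le_choose _ (by omega)
      omega
    -- L nonempty; L is intersecting by shiftedness
    have hLint : Cross L L := by
      intro T hT S hS
      obtain ⟨A, hA, rfl⟩ := mem_image.1 hT
      obtain ⟨B, hB, rfl⟩ := mem_image.1 hS
      rw [mem_filter] at hA hB
      by_cases hother : ∃ t ∈ A ∩ B, t ≠ z
      · obtain ⟨t, ht, htz⟩ := hother
        rw [mem_inter] at ht
        exact ⟨t, mem_inter.2 ⟨mem_erase.2 ⟨htz, ht.1⟩, mem_erase.2 ⟨htz, ht.2⟩⟩⟩
      · exfalso
        push_neg at hother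
        have hAV := mem_powersetCard.1 (hF hA.1)
        have hBV := mem_powersetCard.1 (hF hB.1)
        have hABV : A ∪ B ⊆ V := union_subset hAV.1 hBV.1
        have hABcard : #(A ∪ B) < m := by
          have h1 := card_union_le A B
          have h2 : 0 < #(A ∩ B) := card_pos.2 (hint A hA.1 B hB.1)
          have h3 := card_union_add_card_inter A B
          omega
        have hne : (V \ (A ∪ B)).Nonempty := by
          rw [← card_pos, card_sdiff_of_subset hABV]; omega
        obtain ⟨j₀, hj₀⟩ := hne
        rw [mem_sdiff, mem_union, not_or] at hj₀
        have hj₀z : j₀ < z :=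
          lt_of_le_of_ne (le_max' V j₀ hj₀.1) (fun h => hj₀.2.1 (h ▸ hA.2))
        have hmem := hshF.mem hj₀.1 hzmem hj₀z hA.1 hA.2 hj₀.2.1
        obtain ⟨t, ht⟩ := hint _ hmem B hB.1
        simp only [mem_inter, mem_insert, mem_erase] at ht
        obtain ⟨rfl | ⟨htz, htA⟩, htB⟩ := ht
        · exact hj₀.2.2 htB
        · exact htz (hother t (mem_inter.2 ⟨htA, htB⟩))
    by_cases hLt : NT L
    · -- L nontrivial : induct on k-1
      rcases eq_or_lt_of_le (show 2 ≤ k from hk2) with hk2' | hk3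
      · -- k = 2 : impossible, L would be 1-uniform nontrivial intersecting
        exact absurd (one_uniform (by rw [← hk2'] at hLsub; exact hLsub) hLint hLt) not_false
      -- k ≥ 3
      have hIHL := IHN ((k-1) + (m-1)) (by omega) (measure L) (k-1) (V.erase z) L (by omega)
        le_rfl (by omega) (by omega) hLsub hLint hLt
      rw [hVe] at hIHL
      have e6 : m - 1 - (k-1) - 1 = m - k - 1 := by omega
      have e7 : k - 1 - 1 = k - 2 := by omega
      rw [e6, e7, e5] at hIHL
      have epas : (m-k-2).choose (k-2) + 1 ≤ (m-k-1).choose (k-2) := by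
        have h := pascal (a := m-k-1) (b := k-2) (by omega) (by omega)
        have e8 : k - 2 - 1 = k - 3 := by omega
        have e9 : m - k - 1 - 1 = m - k - 2 := by omega
        rw [e8, e9] at h
        have hpos : 0 < (m-k-2).choose (k-3) := Nat.choose_pos (by omega)
        omega
      omega
    · -- L trivial, nonempty : direct counting
      rw [NT, not_not] at hLt
      obtain ⟨y, hy⟩ := hLt
      -- find B₁ in F₀ avoiding y
      have hB₁ : ∃ B₁ ∈ F₀, y ∉ B₁ := by
        by_contra h
        push_neg at h
        exact hF₀t ⟨y, h⟩
      obtain ⟨B₁, hB₁F, hB₁y⟩ := hB₁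
      have hB₁' := mem_powersetCard.1 (hF₀sub hB₁F)
      have hyW : y ∈ V.erase z := by
        obtain ⟨T₀, hT₀⟩ := hLne
        exact (mem_powersetCard.1 (hLsub hT₀)).1 (hy T₀ hT₀)
      -- L injects into (k-2)-sets of W' meeting B₁
      set W' := (V.erase z).erase y with hW'def
      have hW'card : #W' = m - 2 := by
        rw [hW'def, card_erase_of_mem hyW, hVe]; omega
      have hB₁W' : B₁ ⊆ W' := by
        rw [hW'def]
        intro t ht
        exact mem_erase.2 ⟨fun he => hB₁y (he ▸ ht), hB₁'.1 ht⟩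
      have hLcard : #L = #(L.image (·.erase y)) := by
        rw [eq_comm]
        apply card_image_of_injOn
        intro T hT S hS h
        have h' : T.erase y = S.erase y := h
        rw [← insert_erase (hy T hT), ← insert_erase (hy S hS), h']
      have hLim : L.image (·.erase y) ⊆ (W'.powersetCard (k-2)).filter
          (fun T => (T ∩ B₁).Nonempty) := by
        intro T' hT'
        obtain ⟨T, hT, rfl⟩ := mem_image.1 hT'
        obtain ⟨A, hA, hTA⟩ := mem_image.1 hT
        rw [mem_filter] at hA
        have hmeet : (T ∩ B₁).Nonempty := by
          obtain ⟨t, ht⟩ := hint A hA.1 B₁ (mem_filter.1 hB₁F).1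
          rw [mem_inter] at ht
          have htz : t ≠ z := fun he => (mem_filter.1 hB₁F).2 (he ▸ ht.2)
          exact ⟨t, by rw [← hTA]; exact mem_inter.2 ⟨mem_erase.2 ⟨htz, ht.1⟩, ht.2⟩⟩
        refine mem_filter.2 ⟨?_, ?_⟩
        · have h := mem_powersetCard.1 (hLsub hT)
          refine mem_powersetCard.2 ⟨?_, ?_⟩
          · rw [hW'def]
            exact erase_subset_erase y h.1
          · rw [card_erase_of_mem (hy T hT), h.2]
            omega
        · obtain ⟨t, ht⟩ := hmeet
          rw [mem_inter] at ht
          have hty : t ≠ y := fun he => hB₁y (he ▸ ht.2)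
          exact ⟨t, mem_inter.2 ⟨mem_erase.2 ⟨hty, ht.1⟩, ht.2⟩⟩
      have hcm := card_meeting W' B₁ (k-2) hB₁W'
      rw [hW'card, hB₁'.2] at hcm
      have e10 : m - 2 - k = m - k - 2 := by omega
      rw [e10] at hcm
      have hLbound := (hLcard.trans_le (card_le_card hLim))
      omega
  · -- F₀ trivial : two-cover with {y, z}
    rw [NT, not_not] at hF₀t
    obtain ⟨y, hy⟩ := hF₀t
    obtain ⟨B₀, hB₀⟩ := hF₀ne
    have hyB₀ := hy B₀ hB₀
    rw [hF₀def, mem_filter] at hB₀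
    have hyz : y ≠ z := fun he => hB₀.2 (he ▸ hyB₀)
    have hyV : y ∈ V := (mem_powersetCard.1 (hF hB₀.1)).1 hyB₀
    refine two_cover hk2 (by omega) hyV hzmem hyz hF hint hnt ?_
    intro A hA
    by_cases hzA : z ∈ A
    · exact Or.inr hzA
    · exact Or.inl (hy A (mem_filter.2 ⟨hA, hzA⟩))

end HMaux



/-- **Hilton–Milner theorem.** If `n > 2k > 0` and `F` is a nontrivially intersecting
family of `k`-element subsets of `[n] = {1, ..., n}` (intersecting, but with no element
common to all members), then `|F| ≤ C(n-1, k-1) - C(n-k-1, k-1) + 1`. -/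
theorem hilton_milner (n k : ℕ) (hk : 0 < k) (hnk : 2 * k < n)
    (F : Finset (Finset ℕ))
    (hF : F ⊆ (Finset.Icc 1 n).powersetCard k)
    (hint : ∀ A ∈ F, ∀ B ∈ F, (A ∩ B).Nonempty)
    (hnontriv : ¬ ∃ x, ∀ A ∈ F, x ∈ A) :
    F.card ≤ (n - 1).choose (k - 1) - (n - k - 1).choose (k - 1) + 1 := by
  have hV : #(Finset.Icc 1 n) = n := by rw [Nat.card_Icc]; omega
  have h := HMaux.HMgen (k + n) (HMaux.measure F) k (Finset.Icc 1 n) F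
    (by omega) le_rfl hk (by omega) hF hint hnontriv
  rw [hV] at h
  have hmono : (n - k - 1).choose (k-1) ≤ (n - 1).choose (k-1) :=
    Nat.choose_le_choose _ (by omega)
  omega
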